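/- Let Ω be a topological space, let f, g : Ω → S¹ be continuous maps, and let k be a nonzero integer. If f is homotopic to the pointwise k-th power g^k, then there exists a continuous map f̃ : Ω → S¹ such that f = f̃^k; moreover f̃ can be chosen homotopic to g. -/

import Mathlib

set_option linter.unusedSectionVars false
set_option linter.unnecessarySeqFocus false

open Complex Finset Real Set

section Stmt0Aux

variable {Ω : Type*} [TopologicalSpace Ω]

lemma re_pos_of_dist_lt_one (u v : Circle) (h : dist u v < 1) :
    0 < ((u / v : Circle) : ℂ).re := by
  set w : ℂ := ((u / v : Circle) : ℂ) with hw
  have habs : ‖w‖ = 1 := (u / v).norm_coe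
  have h1 : w.re ^ 2 + w.im ^ 2 = 1 := by
    have := Complex.sq_norm w
    rw [habs, Complex.normSq_apply] at this
    nlinarith [this]
  have hd : ‖w - 1‖ < 1 := by
    have hv : ‖(v : ℂ)‖ = 1 := v.norm_coe
    have : w - 1 = ((u : ℂ) - v) / v := by
      rw [hw, Circle.coe_div]
      field_simp
    rw [this, norm_div, hv, div_one]
    rw [← Complex.dist_eq]; exact h
  have h2 : (w.re - 1) ^ 2 + w.im ^ 2 < 1 := by
    have := Complex.sq_norm (w - 1)
    rw [Complex.normSq_apply, Complex.sub_re, Complex.sub_im, Complex.one_re, Complex.one_im,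
      sub_zero] at this
    nlinarith [hd, norm_nonneg (w - 1)]
  nlinarith

lemma abs_arg_lt_half_pi (u v : Circle) (h : dist u v < 1) :
    |Complex.arg ((u / v : Circle) : ℂ)| < π / 2 :=
  Complex.abs_arg_lt_pi_div_two_iff.2 (Or.inl (re_pos_of_dist_lt_one u v h))

lemma Circle.exp_zpow (r : ℝ) (k : ℤ) : Circle.exp r ^ k = Circle.exp (k * r) := by
  have h : ∀ n : ℕ, Circle.exp r ^ n = Circle.exp (n * r) := by
    intro n
    induction n with
    | zero => simp
    | succ n ih => rw [pow_succ, ih, ← Circle.exp_add]; push_cast; ring_nf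
  rcases k with n | n
  · simpa using h n
  · rw [zpow_negSucc, h (n + 1)]
    rw [← Circle.exp_neg]
    push_cast [Int.negSucc_eq]
    ring_nf

lemma arg_sum (z : ℕ → Circle) (k : ℕ)
    (hz : ∀ a ≤ k, ∀ b ≤ k, dist (z a) (z b) < 1) :
    ∑ j ∈ range k, Complex.arg ((z (j + 1) / z j : Circle) : ℂ)
      = Complex.arg ((z k / z 0 : Circle) : ℂ) := by
  induction k with
  | zero => simp
  | succ k ih =>
    have hz' : ∀ a ≤ k, ∀ b ≤ k, dist (z a) (z b) < 1 := fun a ha b hb =>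
      hz a (ha.trans k.le_succ) b (hb.trans k.le_succ)
    rw [sum_range_succ, ih hz']
    set S := Complex.arg ((z k / z 0 : Circle) : ℂ) with hS
    set a := Complex.arg ((z (k + 1) / z k : Circle) : ℂ) with ha
    have hSb : |S| < π / 2 := abs_arg_lt_half_pi _ _ (hz k k.le_succ 0 (Nat.zero_le _))
    have hab : |a| < π / 2 := abs_arg_lt_half_pi _ _ (hz (k + 1) le_rfl k k.le_succ)
    have hexp : Circle.exp (S + a) = z (k + 1) / z 0 := by
      rw [Circle.exp_add, hS, ha, Circle.exp_arg, Circle.exp_arg]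
      have : ∀ u v w : Circle, u / v * (w / u) = w / v := fun u v w => by
        rw [div_mul_div_comm, mul_comm u w, mul_div_mul_right_eq_div]
      exact this _ _ _
    have h1 := abs_lt.mp hSb
    have h2 := abs_lt.mp hab
    have hpi := Real.pi_pos
    have : Complex.arg ((z (k + 1) / z 0 : Circle) : ℂ) = S + a := by
      rw [← hexp, Circle.arg_exp (by linarith) (by linarith)]
    rw [this]

noncomputable def theta (G : ℝ × Ω → Circle) (n : ℕ) (x : Ω) : ℝ :=
  ∑ i ∈ range n, Complex.arg ((G (((i : ℝ) + 1) / n, x) / G ((i : ℝ) / n, x) : Circle) : ℂ)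

lemma circleExp_sum (n : ℕ) (c : ℕ → ℝ) :
    Circle.exp (∑ i ∈ range n, c i) = ∏ i ∈ range n, Circle.exp (c i) := by
  induction n with
  | zero => simp
  | succ n ih => rw [sum_range_succ, prod_range_succ, Circle.exp_add, ih]

lemma exp_theta (G : ℝ × Ω → Circle) (n : ℕ) (hn : 0 < n) (x : Ω) :
    Circle.exp (theta G n x) = G (1, x) / G (0, x) := by
  unfold theta
  rw [circleExp_sum]
  have hterm : ∀ i ∈ range n, Circle.exp
      (Complex.arg ((G (((i : ℝ) + 1) / n, x) / G ((i : ℝ) / n, x) : Circle) : ℂ))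
      = G (((i : ℝ) + 1) / n, x) / G ((i : ℝ) / n, x) := fun i _ => Circle.exp_arg _
  rw [prod_congr rfl hterm]
  have htel := Finset.prod_range_div (fun i : ℕ => G ((i : ℝ) / n, x)) n
  simp only [Nat.cast_add, Nat.cast_one] at htel
  rw [htel]
  have hne : (n : ℝ) ≠ 0 := Nat.cast_ne_zero.mpr hn.ne'
  norm_num [div_self hne]

def Fine (G : ℝ × Ω → Circle) (n : ℕ) (x : Ω) : Prop :=
  ∀ s ∈ Icc (0:ℝ) 1, ∀ t ∈ Icc (0:ℝ) 1, |s - t| ≤ 1 / n → dist (G (s, x)) (G (t, x)) < 1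

lemma theta_mul (G : ℝ × Ω → Circle) {n k : ℕ} (hn : 0 < n) (hk : 0 < k) {x : Ω}
    (hF : Fine G n x) : theta G (n * k) x = theta G n x := by
  have hnR : (0:ℝ) < n := Nat.cast_pos.mpr hn
  have hkR : (0:ℝ) < k := Nat.cast_pos.mpr hk
  have main : ∀ a : ℕ, a ≤ n →
      (∑ i ∈ range (a * k), Complex.arg
        ((G (((i : ℝ) + 1) / ((n:ℝ) * k), x) / G ((i : ℝ) / ((n:ℝ) * k), x) : Circle) : ℂ))
      = ∑ i ∈ range a, Complex.arg
        ((G (((i : ℝ) + 1) / n, x) / G ((i : ℝ) / n, x) : Circle) : ℂ) := by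
    intro a ha
    induction a with
    | zero => simp
    | succ a ih =>
      have ha' : a ≤ n := (Nat.le_succ a).trans ha
      have haR : (a : ℝ) + 1 ≤ n := by exact_mod_cast ha
      rw [Nat.succ_mul, Finset.sum_range_add, ih ha', Finset.sum_range_succ]
      congr 1
      have hmemz : ∀ j : ℕ, j ≤ k → ((a : ℝ) * k + j) / ((n:ℝ) * k) ∈ Icc (0:ℝ) 1 := by
        intro j hj
        constructor
        · positivity
        · rw [div_le_one (by positivity)]
          have hjR : (j : ℝ) ≤ k := by exact_mod_cast hj
          nlinarith
      have hdist : ∀ p ≤ k, ∀ q ≤ k,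
          dist (G (((a : ℝ) * k + p) / ((n:ℝ) * k), x))
            (G (((a : ℝ) * k + q) / ((n:ℝ) * k), x)) < 1 := by
        intro p hp q hq
        apply hF _ (hmemz p hp) _ (hmemz q hq)
        have hpR : (p : ℝ) ≤ k := by exact_mod_cast hp
        have hqR : (q : ℝ) ≤ k := by exact_mod_cast hq
        have hdiff : ((a : ℝ) * k + p) / ((n:ℝ) * k) - ((a : ℝ) * k + q) / ((n:ℝ) * k)
            = ((p : ℝ) - q) / ((n:ℝ) * k) := by field_simp; ring
        rw [hdiff, abs_div, abs_of_pos (show (0:ℝ) < (n:ℝ) * k by positivity),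
          div_le_div_iff₀ (by positivity) hnR]
        have habs : |(p:ℝ) - q| ≤ k := by
          rw [abs_sub_le_iff]; constructor <;> nlinarith
        nlinarith
      have hterm : ∀ j ∈ range k,
          Complex.arg ((G ((((a * k + j : ℕ) : ℝ) + 1) / ((n:ℝ) * k), x)
            / G (((a * k + j : ℕ) : ℝ) / ((n:ℝ) * k), x) : Circle) : ℂ)
          = Complex.arg ((G (((a : ℝ) * k + ((j+1 : ℕ) : ℝ)) / ((n:ℝ) * k), x)
            / G (((a : ℝ) * k + (j : ℝ)) / ((n:ℝ) * k), x) : Circle) : ℂ) := by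
        intro j _
        have e1 : (((a * k + j : ℕ) : ℝ) + 1) = ((a : ℝ) * k + ((j+1 : ℕ) : ℝ)) := by
          push_cast; ring
        have e2 : (((a * k + j : ℕ) : ℝ)) = ((a : ℝ) * k + (j : ℝ)) := by
          push_cast; ring
        rw [e1, e2]
      have e3 : ((a : ℝ) + 1) / n = ((a : ℝ) * k + ((k : ℕ) : ℝ)) / ((n:ℝ) * k) := by
        field_simp
      have e4 : (a : ℝ) / n = ((a : ℝ) * k + ((0 : ℕ) : ℝ)) / ((n:ℝ) * k) := by
        push_cast; rw [add_zero, div_eq_div_iff hnR.ne' (by positivity)]; ring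
      rw [e3, e4]
      exact (Finset.sum_congr rfl hterm).trans
        (arg_sum (fun j => G (((a : ℝ) * k + j) / ((n:ℝ) * k), x)) k hdist)
  have hmain := main n le_rfl
  unfold theta
  convert hmain using 3 <;> push_cast <;> ring_nf

lemma fine_exists (G : ℝ × Ω → Circle) (hG : Continuous G) (x : Ω) :
    ∃ n : ℕ, 0 < n ∧ Fine G n x := by
  have hc : ContinuousOn (fun s : ℝ => G (s, x)) (Icc 0 1) :=
    (hG.comp (continuous_id.prodMk continuous_const)).continuousOn
  have hu := isCompact_Icc.uniformContinuousOn_of_continuous hc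
  replace hu := Metric.uniformContinuousOn_iff.mp hu
  obtain ⟨δ, hδ, hδ'⟩ := hu 1 one_pos
  obtain ⟨n, hn⟩ := exists_nat_one_div_lt hδ
  refine ⟨n + 1, n.succ_pos, fun s hs t ht hst => hδ' s hs t ht ?_⟩
  rw [Real.dist_eq]
  have : (1 : ℝ) / (n + 1 : ℕ) = 1 / ((n : ℝ) + 1) := by push_cast; ring
  calc |s - t| ≤ 1 / ((n + 1 : ℕ) : ℝ) := hst
    _ = 1 / ((n : ℝ) + 1) := by push_cast; ring
    _ < δ := hn

lemma fine_eventually (G : ℝ × Ω → Circle) (hG : Continuous G) {n : ℕ} {x₀ : Ω}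
    (h : Fine G n x₀) : ∀ᶠ x in nhds x₀, Fine G n x := by
  set K : Set (ℝ × ℝ) := {p | p.1 ∈ Icc (0:ℝ) 1 ∧ p.2 ∈ Icc (0:ℝ) 1 ∧ |p.1 - p.2| ≤ 1 / n}
    with hK
  have hKc : IsCompact K := by
    apply (isCompact_Icc.prod isCompact_Icc).of_isClosed_subset
    · apply IsClosed.inter (isClosed_Icc.preimage continuous_fst)
      apply IsClosed.inter (isClosed_Icc.preimage continuous_snd)
      exact isClosed_le ((continuous_fst.sub continuous_snd).abs) continuous_const
    · intro p hp; exact ⟨hp.1, hp.2.1⟩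
  have hev := hKc.eventually_forall_of_forall_eventually
    (x₀ := x₀) (P := fun x p => dist (G (p.1, x)) (G (p.2, x)) < 1) ?_
  · filter_upwards [hev] with x hx s hs t ht hst
    exact hx (s, t) ⟨hs, ht, hst⟩
  · intro p hp
    have hc : ContinuousAt (fun z : Ω × (ℝ × ℝ) => dist (G (z.2.1, z.1)) (G (z.2.2, z.1)))
        (x₀, p) := by fun_prop
    have hval : dist (G (p.1, x₀)) (G (p.2, x₀)) < 1 := h p.1 hp.1 p.2 hp.2.1 hp.2.2
    have := hc.eventually_lt continuousAt_const hval
    exact this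

lemma theta_continuousAt (G : ℝ × Ω → Circle) (hG : Continuous G) {n : ℕ} {x₀ : Ω}
    (hn : 0 < n) (h : Fine G n x₀) : ContinuousAt (theta G n) x₀ := by
  have hnR : (0:ℝ) < n := Nat.cast_pos.mpr hn
  apply tendsto_finset_sum
  intro i hi
  rw [Finset.mem_range] at hi
  have hiR : (i : ℝ) + 1 ≤ n := by exact_mod_cast hi
  have hm1 : ((i : ℝ) + 1) / n ∈ Icc (0:ℝ) 1 := ⟨by positivity, by rw [div_le_one hnR]; linarith⟩
  have hm2 : (i : ℝ) / n ∈ Icc (0:ℝ) 1 :=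
    ⟨by positivity, by rw [div_le_one hnR]; linarith⟩
  have hd : dist (G (((i : ℝ) + 1) / n, x₀)) (G ((i : ℝ) / n, x₀)) < 1 := by
    apply h _ hm1 _ hm2
    have : ((i : ℝ) + 1) / n - (i : ℝ) / n = 1 / n := by field_simp; ring
    rw [this, abs_of_pos (by positivity)]
  have hre : 0 < ((G (((i : ℝ) + 1) / n, x₀) / G ((i : ℝ) / n, x₀) : Circle) : ℂ).re :=
    re_pos_of_dist_lt_one _ _ hd
  have hcirc : Continuous (fun x => (G (((i : ℝ) + 1) / n, x) / G ((i : ℝ) / n, x) : Circle)) :=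
    (hG.comp (continuous_const.prodMk continuous_id)).div'
      (hG.comp (continuous_const.prodMk continuous_id))
  have hinner : ContinuousAt
      (fun x => ((G (((i : ℝ) + 1) / n, x) / G ((i : ℝ) / n, x) : Circle) : ℂ)) x₀ :=
    (continuous_subtype_val.comp hcirc).continuousAt
  exact ContinuousAt.comp (x := x₀)
    (g := Complex.arg)
    (f := fun x => ((G (((i : ℝ) + 1) / n, x) / G ((i : ℝ) / n, x) : Circle) : ℂ))
    (Complex.continuousAt_arg (Complex.mem_slitPlane_iff.2 (Or.inl hre))) hinner

lemma circle_lift (G : ℝ × Ω → Circle) (hG : Continuous G) :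
    ∃ θ : Ω → ℝ, Continuous θ ∧ ∀ x, Circle.exp (θ x) = G (1, x) / G (0, x) := by
  choose n hn hF using fine_exists G hG
  refine ⟨fun x => theta G (n x) x, ?_, fun x => exp_theta G _ (hn x) x⟩
  rw [continuous_iff_continuousAt]
  intro x₀
  have h1 : ∀ᶠ x in nhds x₀, Fine G (n x₀) x := fine_eventually G hG (hF x₀)
  have h2 : ∀ᶠ x in nhds x₀, theta G (n x₀) x = theta G (n x) x := by
    filter_upwards [h1] with x hx
    calc theta G (n x₀) x = theta G (n x₀ * n x) x := (theta_mul G (hn x₀) (hn x) hx).symm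
      _ = theta G (n x * n x₀) x := by rw [Nat.mul_comm]
      _ = theta G (n x) x := theta_mul G (hn x) (hn x₀) (hF x)
  exact (theta_continuousAt G hG (hn x₀) (hF x₀)).congr h2

end Stmt0Aux

/-- Let `Ω` be a topological space, let `f, g : Ω → S¹` be continuous maps, and let `k` be a
nonzero integer.  If `f` is homotopic to the pointwise `k`-th power `g^k`, then there exists a
continuous map `f̃ : Ω → S¹` such that `f = f̃^k`; moreover `f̃` can be chosen homotopic to `g`. -/
theorem stmt0 {Ω : Type*} [TopologicalSpace Ω] (f g : C(Ω, Circle)) (k : ℤ) (hk : k ≠ 0)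
    (h : f.Homotopic ⟨fun x => g x ^ k, (map_continuous g).zpow k⟩) :
    ∃ ftil : C(Ω, Circle), (∀ x, f x = ftil x ^ k) ∧ ftil.Homotopic g := by
  obtain ⟨H⟩ := h
  have hkR : (k : ℝ) ≠ 0 := Int.cast_ne_zero.mpr hk
  set G : ℝ × Ω → Circle :=
    fun p => H (Set.projIcc 0 1 zero_le_one p.1, p.2) / g p.2 ^ k with hGdef
  have hG : Continuous G := by
    apply Continuous.div'
    · exact H.continuous.comp
        ((continuous_projIcc.comp continuous_fst).prodMk continuous_snd)
    · exact ((map_continuous g).zpow k).comp continuous_snd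
  have hG0 : ∀ x, G (0, x) = f x / g x ^ k := by
    intro x
    have hp : Set.projIcc (0:ℝ) 1 zero_le_one 0 = (0 : unitInterval) := by
      simp [Set.projIcc]
    simp only [hGdef, hp, H.apply_zero]
  have hG1 : ∀ x, G (1, x) = 1 := by
    intro x
    have hp : Set.projIcc (0:ℝ) 1 zero_le_one 1 = (1 : unitInterval) := by
      simp [Set.projIcc]
    simp only [hGdef, hp, H.apply_one]
    simp
  obtain ⟨θ, hθc, hθ⟩ := circle_lift G hG
  have hexp : ∀ x, Circle.exp (θ x) = (f x / g x ^ k)⁻¹ := by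
    intro x
    rw [hθ x, hG1, hG0, one_div]
  refine ⟨⟨fun x => g x * Circle.exp (-θ x / k),
    (map_continuous g).mul (Circle.exp.continuous.comp ((hθc.neg).div_const _))⟩, ?_, ?_⟩
  · intro x
    show f x = (g x * Circle.exp (-θ x / k)) ^ k
    rw [mul_zpow, Circle.exp_zpow]
    have harg : (k : ℝ) * (-θ x / k) = -θ x := by field_simp
    rw [harg, Circle.exp_neg, hexp x]
    simp
  · refine ⟨⟨⟨fun p => g p.2 * Circle.exp ((1 - (p.1 : ℝ)) * (-θ p.2 / k)), ?_⟩, ?_, ?_⟩⟩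
    · exact ((map_continuous g).comp continuous_snd).mul
        (Circle.exp.continuous.comp
          ((continuous_const.sub (continuous_subtype_val.comp continuous_fst)).mul
            (((hθc.comp continuous_snd).neg).div_const _)))
    · intro x; simp
    · intro x; simp
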